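/- Let X be a countable set, p : X × X → [0,∞) with Σ_{y∈X} p(x,y) = 1 for every x and m_p := sup_{y∈X} Σ_{x∈X} p(x,y) < ∞, and a : X → (0,∞) satisfying Σ_{y∈X} p(x,y)·a_y + Σ_{y∈X} a_y·p(y,x) ≤ M·a_x for all x ∈ X and some constant M. Let X_n ⊆ X be a finite subset. Let (g^k_{α,β}) be a family of mass-migration rates satisfying condition (C2) with constant C, and let G^{k,l}_{α,β,γ,δ} be the associated coupling rates. For η, η' : X_n → ℕ set ‖η − η'‖ := Σ_{x∈X_n} |η(x) − η'(x)|·a_x. Then the coupled generator applied to the distance function satisfies | Σ_{x≠y ∈ X_n} p(x,y)·Σ_{k=0}^{η(x)} Σ_{l=0}^{η'(x)} G^{k,l}_{η(x),η(y),η'(x),η'(y)}·( ‖S^k_{x,y}η − S^l_{x,y}η'‖ − ‖η − η'‖ ) | ≤ 2C·(1 + m_p + M)·‖η − η'‖. -/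

import Mathlib

/-- Tail sums of the rates: `Σ^k_{α,β} = Σ_{k' = k+1}^{α} g^{k'}_{α,β}`. -/
def Sig (g : ℕ → ℕ → ℕ → ℝ) (k α β : ℕ) : ℝ :=
  ∑ k' ∈ Finset.Icc (k + 1) α, g k' α β

/-- The coupling rates `G^{k,l}_{α,β,γ,δ}` of the mass migration process. -/
def Gc (g : ℕ → ℕ → ℕ → ℝ) (k l α β γ δ : ℕ) : ℝ :=
  if k = 0 then
    (if l = 0 then 0 else
      g l γ δ - min (g l γ δ)
        (Sig g 0 α β - min (Sig g 0 α β) (Sig g l γ δ)))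
  else if l = 0 then
    g k α β - min (g k α β)
      (Sig g 0 γ δ - min (Sig g 0 γ δ) (Sig g k α β))
  else
    min
      (g k α β - min (g k α β)
        (Sig g l γ δ - min (Sig g l γ δ) (Sig g k α β)))
      (g l γ δ - min (g l γ δ)
        (Sig g k α β - min (Sig g k α β) (Sig g l γ δ)))

noncomputable def ov (c d e f : ℝ) : ℝ := max 0 (min d f - max c e)

lemma aux1 {u v w : ℝ} (huv : w ≤ v) :
    (v - w) - min (v - w) (u - min u w) = max 0 (v - max u w) := by
  simp only [min_def, max_def]; split_ifs <;> linarith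

lemma aux2 (x y m : ℝ) :
    min (max 0 (x - m)) (max 0 (y - m)) = max 0 (min x y - m) := by
  simp only [min_def, max_def]; split_ifs <;> linarith

lemma Sig_nonneg (g : ℕ → ℕ → ℕ → ℝ) (hgnn : ∀ k α β : ℕ, 0 ≤ g k α β)
    (k α β : ℕ) : 0 ≤ Sig g k α β :=
  Finset.sum_nonneg fun i _ => hgnn i α β

lemma Sig_anti (g : ℕ → ℕ → ℕ → ℝ) (hgnn : ∀ k α β : ℕ, 0 ≤ g k α β)
    {j k : ℕ} (h : j ≤ k) (α β : ℕ) : Sig g k α β ≤ Sig g j α β :=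
  Finset.sum_le_sum_of_subset_of_nonneg
    (Finset.Icc_subset_Icc (by omega) le_rfl) (fun i _ _ => hgnn i α β)

lemma Sig_eq_zero (g : ℕ → ℕ → ℕ → ℝ) {k α : ℕ} (h : α ≤ k) (β : ℕ) :
    Sig g k α β = 0 := by
  rw [Sig, Finset.Icc_eq_empty (by omega), Finset.sum_empty]

lemma g_eq_sub (g : ℕ → ℕ → ℕ → ℝ)
    (hgz : ∀ k α β : ℕ, α < k ∨ α = 0 → g k α β = 0)
    {k : ℕ} (hk : 1 ≤ k) (α β : ℕ) :
    g k α β = Sig g (k - 1) α β - Sig g k α β := by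
  rcases le_or_gt k α with h | h
  · have hins : Finset.Icc (k - 1 + 1) α = insert k (Finset.Icc (k + 1) α) := by
      ext i; simp [Finset.mem_Icc, Finset.mem_insert]; omega
    rw [Sig, Sig, hins, Finset.sum_insert (by simp)]
    ring
  · rw [Sig_eq_zero g (by omega) β, Sig_eq_zero g (by omega) β,
      hgz k α β (Or.inl h)]
    ring

lemma Gc_eq_ov (g : ℕ → ℕ → ℕ → ℝ) (hgnn : ∀ k α β : ℕ, 0 ≤ g k α β)
    (hgz : ∀ k α β : ℕ, α < k ∨ α = 0 → g k α β = 0) (α β γ δ k l : ℕ) :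
    Gc g k l α β γ δ =
      ov (Sig g k α β)
        (if k = 0 then max (Sig g 0 α β) (Sig g 0 γ δ) else Sig g (k - 1) α β)
        (Sig g l γ δ)
        (if l = 0 then max (Sig g 0 α β) (Sig g 0 γ δ) else Sig g (l - 1) γ δ) := by
  have hA0T : Sig g 0 α β ≤ max (Sig g 0 α β) (Sig g 0 γ δ) := le_max_left _ _
  have hB0T : Sig g 0 γ δ ≤ max (Sig g 0 α β) (Sig g 0 γ δ) := le_max_right _ _
  rcases Nat.eq_zero_or_pos k with hk | hk <;> rcases Nat.eq_zero_or_pos l with hl | hl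
  · subst hk; subst hl
    simp [Gc, ov, min_self]
  · subst hk
    have hl0 : l ≠ 0 := by omega
    have hBl : Sig g l γ δ ≤ Sig g (l - 1) γ δ := Sig_anti g hgnn (by omega) γ δ
    have hBl0 : Sig g (l - 1) γ δ ≤ Sig g 0 γ δ := Sig_anti g hgnn (by omega) γ δ
    simp only [Gc, if_pos rfl, if_neg hl0, ov, eq_self_iff_true, if_true]
    rw [g_eq_sub g hgz hl γ δ, aux1 hBl,
      min_eq_right (le_trans hBl0 hB0T)]
  · subst hl
    have hk0 : k ≠ 0 := by omega
    have hAk : Sig g k α β ≤ Sig g (k - 1) α β := Sig_anti g hgnn (by omega) α β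
    have hAk0 : Sig g (k - 1) α β ≤ Sig g 0 α β := Sig_anti g hgnn (by omega) α β
    simp only [Gc, if_neg hk0, if_pos rfl, ov, eq_self_iff_true, if_true]
    rw [g_eq_sub g hgz hk α β, aux1 hAk,
      min_eq_left (le_trans hAk0 hA0T), max_comm (Sig g 0 γ δ) (Sig g k α β)]
  · have hk0 : k ≠ 0 := by omega
    have hl0 : l ≠ 0 := by omega
    have hAk : Sig g k α β ≤ Sig g (k - 1) α β := Sig_anti g hgnn (by omega) α β
    have hBl : Sig g l γ δ ≤ Sig g (l - 1) γ δ := Sig_anti g hgnn (by omega) γ δ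
    simp only [Gc, if_neg hk0, if_neg hl0, ov]
    rw [g_eq_sub g hgz hk α β, g_eq_sub g hgz hl γ δ, aux1 hAk, aux1 hBl,
      max_comm (Sig g l γ δ) (Sig g k α β), aux2]
lemma ov_nonneg (c d e f : ℝ) : 0 ≤ ov c d e f := le_max_left _ _

lemma ov_comm (c d e f : ℝ) : ov c d e f = ov e f c d := by
  rw [ov, ov, min_comm d f, max_comm c e]

lemma ov_split {c m d : ℝ} (e f : ℝ) (h1 : c ≤ m) (h2 : m ≤ d) :
    ov c d e f = ov c m e f + ov m d e f := by
  simp only [ov, min_def, max_def]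
  split_ifs <;> linarith

lemma sum_range_ov (B : ℕ → ℝ) (hanti : ∀ i j : ℕ, i ≤ j → B j ≤ B i)
    (T c d : ℝ) (hT : B 0 ≤ T) {j : ℕ} (hj : 1 ≤ j) :
    ∑ l ∈ Finset.range j, ov c d (B l) (if l = 0 then T else B (l - 1))
      = ov c d (B (j - 1)) T := by
  induction j, hj using Nat.le_induction with
  | base => simp
  | succ j hj ih =>
    rw [Finset.sum_range_succ, ih, if_neg (by omega)]
    have h1 : B j ≤ B (j - 1) := hanti _ _ (by omega)
    have h2 : B (j - 1) ≤ T := le_trans (hanti 0 _ (by omega)) hT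
    rw [ov_comm c d, ov_comm c d (B j), ov_comm c d (B (j + 1 - 1)),
      show j + 1 - 1 = j from rfl]
    rw [ov_split c d h1 h2]
    ring

lemma sum_Icc_ov (A : ℕ → ℝ) (hanti : ∀ i j : ℕ, i ≤ j → A j ≤ A i)
    (e f : ℝ) {j m : ℕ} (hj : 1 ≤ j) (hjm : j ≤ m) :
    ∑ k ∈ Finset.Icc j m, ov (A k) (A (k - 1)) e f = ov (A m) (A (j - 1)) e f := by
  induction m, hjm using Nat.le_induction with
  | base => simp
  | succ m hm ih =>
    rw [Finset.sum_Icc_succ_top (by omega), ih,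
      show m + 1 - 1 = m from rfl]
    have h1 : A (m + 1) ≤ A m := hanti _ _ (by omega)
    have h2 : A m ≤ A (j - 1) := hanti _ _ (by omega)
    rw [ov_split e f h1 h2]
    ring

lemma max_add_max_abs (x : ℝ) : max 0 x + max 0 (-x) = |x| := by
  rcases le_total 0 x with h | h
  · rw [max_eq_right h, max_eq_left (by linarith), abs_of_nonneg h]; ring
  · rw [max_eq_left h, max_eq_right (by linarith), abs_of_nonpos h]; ring

lemma S1_eq (g : ℕ → ℕ → ℕ → ℝ) (hgnn : ∀ k α β : ℕ, 0 ≤ g k α β)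
    (hgz : ∀ k α β : ℕ, α < k ∨ α = 0 → g k α β = 0)
    (α β γ δ : ℕ) {j : ℕ} (hj1 : 1 ≤ j) (hjN : j ≤ max α γ) :
    ∑ k ∈ Finset.Icc j (max α γ), ∑ l ∈ Finset.range j, Gc g k l α β γ δ
      = max 0 (Sig g (j - 1) α β - Sig g (j - 1) γ δ) := by
  set N := max α γ with hN
  set T := max (Sig g 0 α β) (Sig g 0 γ δ) with hTdef
  have hAanti : ∀ i j : ℕ, i ≤ j → Sig g j α β ≤ Sig g i α β :=
    fun i j h => Sig_anti g hgnn h α β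
  have hBanti : ∀ i j : ℕ, i ≤ j → Sig g j γ δ ≤ Sig g i γ δ :=
    fun i j h => Sig_anti g hgnn h γ δ
  have step1 : ∀ k ∈ Finset.Icc j N, ∑ l ∈ Finset.range j, Gc g k l α β γ δ
      = ov (Sig g k α β) (Sig g (k - 1) α β) (Sig g (j - 1) γ δ) T := by
    intro k hk
    simp only [Finset.mem_Icc] at hk
    have hk0 : k ≠ 0 := by omega
    calc ∑ l ∈ Finset.range j, Gc g k l α β γ δ
        = ∑ l ∈ Finset.range j, ov (Sig g k α β)
            (if k = 0 then T else Sig g (k - 1) α β)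
            (Sig g l γ δ) (if l = 0 then T else Sig g (l - 1) γ δ) :=
          Finset.sum_congr rfl fun l _ => Gc_eq_ov g hgnn hgz α β γ δ k l
      _ = ov (Sig g k α β) (if k = 0 then T else Sig g (k - 1) α β)
            (Sig g (j - 1) γ δ) T :=
          sum_range_ov _ hBanti T _ _ (le_max_right _ _) hj1
      _ = _ := by rw [if_neg hk0]
  rw [Finset.sum_congr rfl step1, sum_Icc_ov _ hAanti _ _ hj1 hjN, ov,
    Sig_eq_zero g (le_max_left α γ) β,
    max_eq_right (Sig_nonneg g hgnn (j - 1) γ δ),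
    min_eq_left (le_trans (hAanti 0 (j - 1) (Nat.zero_le _)) (le_max_left _ _))]

lemma S2_eq (g : ℕ → ℕ → ℕ → ℝ) (hgnn : ∀ k α β : ℕ, 0 ≤ g k α β)
    (hgz : ∀ k α β : ℕ, α < k ∨ α = 0 → g k α β = 0)
    (α β γ δ : ℕ) {j : ℕ} (hj1 : 1 ≤ j) (hjN : j ≤ max α γ) :
    ∑ k ∈ Finset.range j, ∑ l ∈ Finset.Icc j (max α γ), Gc g k l α β γ δ
      = max 0 (Sig g (j - 1) γ δ - Sig g (j - 1) α β) := by
  set N := max α γ with hN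
  set T := max (Sig g 0 α β) (Sig g 0 γ δ) with hTdef
  have hAanti : ∀ i j : ℕ, i ≤ j → Sig g j α β ≤ Sig g i α β :=
    fun i j h => Sig_anti g hgnn h α β
  have hBanti : ∀ i j : ℕ, i ≤ j → Sig g j γ δ ≤ Sig g i γ δ :=
    fun i j h => Sig_anti g hgnn h γ δ
  have step1 : ∀ k ∈ Finset.range j, ∑ l ∈ Finset.Icc j N, Gc g k l α β γ δ
      = ov (Sig g N γ δ) (Sig g (j - 1) γ δ)
          (Sig g k α β) (if k = 0 then T else Sig g (k - 1) α β) := by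
    intro k _
    calc ∑ l ∈ Finset.Icc j N, Gc g k l α β γ δ
        = ∑ l ∈ Finset.Icc j N, ov (Sig g l γ δ) (Sig g (l - 1) γ δ)
            (Sig g k α β) (if k = 0 then T else Sig g (k - 1) α β) := by
          refine Finset.sum_congr rfl fun l hl => ?_
          simp only [Finset.mem_Icc] at hl
          rw [Gc_eq_ov g hgnn hgz α β γ δ k l, if_neg (show l ≠ 0 by omega),
            ov_comm]
      _ = _ := sum_Icc_ov _ hBanti _ _ hj1 hjN
  rw [Finset.sum_congr rfl step1,
    sum_range_ov _ hAanti T _ _ (le_max_left _ _) hj1, ov,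
    Sig_eq_zero g (le_max_right α γ) δ,
    max_eq_right (Sig_nonneg g hgnn (j - 1) α β),
    min_eq_left (le_trans (hBanti 0 (j - 1) (Nat.zero_le _)) (le_max_right _ _))]

lemma Gc_nonneg (g : ℕ → ℕ → ℕ → ℝ) (hgnn : ∀ k α β : ℕ, 0 ≤ g k α β)
    (hgz : ∀ k α β : ℕ, α < k ∨ α = 0 → g k α β = 0) (α β γ δ k l : ℕ) :
    0 ≤ Gc g k l α β γ δ := by
  rw [Gc_eq_ov g hgnn hgz]; exact ov_nonneg _ _ _ _

lemma double_eq (g : ℕ → ℕ → ℕ → ℝ) (hgnn : ∀ k α β : ℕ, 0 ≤ g k α β)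
    (hgz : ∀ k α β : ℕ, α < k ∨ α = 0 → g k α β = 0)
    (α β γ δ : ℕ) {j : ℕ} (hj1 : 1 ≤ j) (hjN : j ≤ max α γ) :
    ∑ k ∈ Finset.range (max α γ + 1), ∑ l ∈ Finset.range (max α γ + 1),
      Gc g k l α β γ δ * |(if j ≤ k then (1:ℝ) else 0) - (if j ≤ l then 1 else 0)|
    = |Sig g (j - 1) α β - Sig g (j - 1) γ δ| := by
  set N := max α γ with hN
  have hsplit : ∀ f : ℕ → ℝ, ∑ i ∈ Finset.range (N + 1), f i
      = ∑ i ∈ Finset.range j, f i + ∑ i ∈ Finset.Icc j N, f i := by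
    intro f
    rw [Finset.range_eq_Ico,
      ← Finset.sum_Ico_consecutive f (Nat.zero_le j) (by omega : j ≤ N + 1),
      Finset.Ico_add_one_right_eq_Icc, ← Finset.range_eq_Ico]
  rw [hsplit]
  have h1 : ∀ k ∈ Finset.range j, (∑ l ∈ Finset.range (N + 1),
      Gc g k l α β γ δ * |(if j ≤ k then (1:ℝ) else 0) - (if j ≤ l then 1 else 0)|)
      = ∑ l ∈ Finset.Icc j N, Gc g k l α β γ δ := by
    intro k hk
    have hkj : ¬ j ≤ k := by simp only [Finset.mem_range] at hk; omega
    rw [hsplit]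
    have z1 : (∑ l ∈ Finset.range j,
        Gc g k l α β γ δ * |(if j ≤ k then (1:ℝ) else 0) - (if j ≤ l then 1 else 0)|) = 0 :=
      Finset.sum_eq_zero fun l hl => by
        have hlj : ¬ j ≤ l := by simp only [Finset.mem_range] at hl; omega
        simp [hkj, hlj]
    have z2 : (∑ l ∈ Finset.Icc j N,
        Gc g k l α β γ δ * |(if j ≤ k then (1:ℝ) else 0) - (if j ≤ l then 1 else 0)|)
        = ∑ l ∈ Finset.Icc j N, Gc g k l α β γ δ :=
      Finset.sum_congr rfl fun l hl => by
        have hlj : j ≤ l := by simp only [Finset.mem_Icc] at hl; omega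
        simp [hkj, hlj]
    rw [z1, z2, zero_add]
  have h2 : ∀ k ∈ Finset.Icc j N, (∑ l ∈ Finset.range (N + 1),
      Gc g k l α β γ δ * |(if j ≤ k then (1:ℝ) else 0) - (if j ≤ l then 1 else 0)|)
      = ∑ l ∈ Finset.range j, Gc g k l α β γ δ := by
    intro k hk
    have hkj : j ≤ k := by simp only [Finset.mem_Icc] at hk; omega
    rw [hsplit]
    have z1 : (∑ l ∈ Finset.range j,
        Gc g k l α β γ δ * |(if j ≤ k then (1:ℝ) else 0) - (if j ≤ l then 1 else 0)|)
        = ∑ l ∈ Finset.range j, Gc g k l α β γ δ :=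
      Finset.sum_congr rfl fun l hl => by
        have hlj : ¬ j ≤ l := by simp only [Finset.mem_range] at hl; omega
        simp [hkj, hlj]
    have z2 : (∑ l ∈ Finset.Icc j N,
        Gc g k l α β γ δ * |(if j ≤ k then (1:ℝ) else 0) - (if j ≤ l then 1 else 0)|) = 0 :=
      Finset.sum_eq_zero fun l hl => by
        have hlj : j ≤ l := by simp only [Finset.mem_Icc] at hl; omega
        simp [hkj, hlj]
    rw [z1, z2, add_zero]
  rw [Finset.sum_congr rfl h1, Finset.sum_congr rfl h2,
    S2_eq g hgnn hgz α β γ δ hj1 hjN, S1_eq g hgnn hgz α β γ δ hj1 hjN]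
  rw [show Sig g (j - 1) γ δ - Sig g (j - 1) α β
      = -(Sig g (j - 1) α β - Sig g (j - 1) γ δ) by ring, add_comm]
  exact max_add_max_abs _

lemma key (g : ℕ → ℕ → ℕ → ℝ) (hgnn : ∀ k α β : ℕ, 0 ≤ g k α β)
    (hgz : ∀ k α β : ℕ, α < k ∨ α = 0 → g k α β = 0)
    (C : ℝ)
    (hC2 : ∀ α β γ δ : ℕ,
      ∑ k ∈ Finset.Icc 1 (max α γ), (k : ℝ) * |g k α β - g k γ δ|
        ≤ C * (|(α : ℝ) - (γ : ℝ)| + |(β : ℝ) - (δ : ℝ)|))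
    (α β γ δ : ℕ) :
    ∑ k ∈ Finset.range (α + 1), ∑ l ∈ Finset.range (γ + 1),
        Gc g k l α β γ δ * |(k : ℝ) - (l : ℝ)|
      ≤ C * (|(α : ℝ) - (γ : ℝ)| + |(β : ℝ) - (δ : ℝ)|) := by
  set N := max α γ with hN
  have hGnn : ∀ k l : ℕ, 0 ≤ Gc g k l α β γ δ := fun k l => Gc_nonneg g hgnn hgz α β γ δ k l
  have hterm : ∀ k l : ℕ, 0 ≤ Gc g k l α β γ δ * |(k : ℝ) - (l : ℝ)| :=
    fun k l => mul_nonneg (hGnn k l) (abs_nonneg _)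
  have hcount : ∀ i : ℕ, i ≤ N →
      (∑ j ∈ Finset.Icc 1 N, if j ≤ i then (1:ℝ) else 0) = i := by
    intro i hi
    rw [← Finset.sum_filter,
      show (Finset.Icc 1 N).filter (fun j => j ≤ i) = Finset.Icc 1 i by
        ext j; simp only [Finset.mem_filter, Finset.mem_Icc]; omega]
    simp [Nat.card_Icc]
  have habs : ∀ k l : ℕ, k ≤ N → l ≤ N → |(k : ℝ) - (l : ℝ)|
      ≤ ∑ j ∈ Finset.Icc 1 N, |(if j ≤ k then (1:ℝ) else 0) - (if j ≤ l then 1 else 0)| := by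
    intro k l hk hl
    calc |(k : ℝ) - (l : ℝ)|
        = |∑ j ∈ Finset.Icc 1 N,
            ((if j ≤ k then (1:ℝ) else 0) - (if j ≤ l then 1 else 0))| := by
          rw [Finset.sum_sub_distrib, hcount k hk, hcount l hl]
      _ ≤ _ := Finset.abs_sum_le_sum_abs _ _
  calc ∑ k ∈ Finset.range (α + 1), ∑ l ∈ Finset.range (γ + 1),
        Gc g k l α β γ δ * |(k : ℝ) - (l : ℝ)|
      ≤ ∑ k ∈ Finset.range (N + 1), ∑ l ∈ Finset.range (N + 1),
        Gc g k l α β γ δ * |(k : ℝ) - (l : ℝ)| := by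
        refine le_trans (Finset.sum_le_sum fun k _ =>
          Finset.sum_le_sum_of_subset_of_nonneg
            (Finset.range_subset_range.2 (Nat.succ_le_succ (le_max_right α γ)))
            (fun l _ _ => hterm k l)) ?_
        exact Finset.sum_le_sum_of_subset_of_nonneg
          (Finset.range_subset_range.2 (Nat.succ_le_succ (le_max_left α γ)))
          (fun k _ _ => Finset.sum_nonneg fun l _ => hterm k l)
    _ ≤ ∑ k ∈ Finset.range (N + 1), ∑ l ∈ Finset.range (N + 1),
          ∑ j ∈ Finset.Icc 1 N, Gc g k l α β γ δ *
            |(if j ≤ k then (1:ℝ) else 0) - (if j ≤ l then 1 else 0)| := by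
        refine Finset.sum_le_sum fun k hk => Finset.sum_le_sum fun l hl => ?_
        rw [← Finset.mul_sum]
        exact mul_le_mul_of_nonneg_left
          (habs k l (by simp only [Finset.mem_range] at hk; omega)
            (by simp only [Finset.mem_range] at hl; omega)) (hGnn k l)
    _ = ∑ j ∈ Finset.Icc 1 N, ∑ k ∈ Finset.range (N + 1), ∑ l ∈ Finset.range (N + 1),
          Gc g k l α β γ δ *
            |(if j ≤ k then (1:ℝ) else 0) - (if j ≤ l then 1 else 0)| := by
        rw [Finset.sum_congr rfl fun k (_ : k ∈ Finset.range (N+1)) => Finset.sum_comm]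
        exact Finset.sum_comm
    _ = ∑ j ∈ Finset.Icc 1 N, |Sig g (j - 1) α β - Sig g (j - 1) γ δ| := by
        refine Finset.sum_congr rfl fun j hj => ?_
        simp only [Finset.mem_Icc] at hj
        exact double_eq g hgnn hgz α β γ δ hj.1 hj.2
    _ ≤ ∑ j ∈ Finset.Icc 1 N, ∑ i ∈ Finset.Icc j N, |g i α β - g i γ δ| := by
        refine Finset.sum_le_sum fun j hj => ?_
        simp only [Finset.mem_Icc] at hj
        have hA : Sig g (j - 1) α β = ∑ i ∈ Finset.Icc j N, g i α β := by
          rw [Sig, show j - 1 + 1 = j by omega]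
          exact Finset.sum_subset (Finset.Icc_subset_Icc le_rfl (le_max_left α γ))
            (fun i hi hni => hgz i α β (Or.inl (by
              simp only [Finset.mem_Icc] at hi hni; omega)))
        have hB : Sig g (j - 1) γ δ = ∑ i ∈ Finset.Icc j N, g i γ δ := by
          rw [Sig, show j - 1 + 1 = j by omega]
          exact Finset.sum_subset (Finset.Icc_subset_Icc le_rfl (le_max_right α γ))
            (fun i hi hni => hgz i γ δ (Or.inl (by
              simp only [Finset.mem_Icc] at hi hni; omega)))
        rw [hA, hB, ← Finset.sum_sub_distrib]
        exact Finset.abs_sum_le_sum_abs _ _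
    _ = ∑ i ∈ Finset.Icc 1 N, (i : ℝ) * |g i α β - g i γ δ| := by
        rw [Finset.sum_comm' (t' := Finset.Icc 1 N) (s' := fun i => Finset.Icc 1 i)
          (fun x y => by simp only [Finset.mem_Icc]; omega)]
        refine Finset.sum_congr rfl fun i hi => ?_
        rw [Finset.sum_const, Nat.card_Icc, show i + 1 - 1 = i from rfl,
          nsmul_eq_mul]
    _ ≤ C * (|(α : ℝ) - (γ : ℝ)| + |(β : ℝ) - (δ : ℝ)|) := hC2 α β γ δ

lemma sum_sdiff_comm {X : Type*} [DecidableEq X] (Xn : Finset X) (f : X → X → ℝ) :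
    ∑ x ∈ Xn, ∑ y ∈ Xn \ {x}, f x y = ∑ y ∈ Xn, ∑ x ∈ Xn \ {y}, f x y :=
  Finset.sum_comm' (fun u v => by
    simp only [Finset.mem_sdiff, Finset.mem_singleton]
    constructor
    · rintro ⟨h1, h2, h3⟩; exact ⟨⟨h1, fun h => h3 h.symm⟩, h2⟩
    · rintro ⟨⟨h1, h3⟩, h2⟩; exact ⟨h1, h2, fun h => h3 h.symm⟩)

lemma outer_bound {X : Type*} [DecidableEq X] (Xn : Finset X)
    (p : X → X → ℝ) (a dd : X → ℝ)
    (hann : ∀ x, 0 ≤ a x) (hdd : ∀ x, 0 ≤ dd x)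
    (M mp : ℝ)
    (hrowle : ∀ (x : X) (s : Finset X), ∑ y ∈ s, p x y ≤ 1)
    (hMa1 : ∀ (x : X) (s : Finset X), ∑ y ∈ s, p x y * a y ≤ M * a x)
    (hMa2 : ∀ (y : X) (s : Finset X), ∑ x ∈ s, a x * p x y ≤ M * a y)
    (hcolle : ∀ (y : X) (s : Finset X), ∑ x ∈ s, p x y ≤ mp) :
    ∑ x ∈ Xn, ∑ y ∈ Xn \ {x}, p x y * ((dd x + dd y) * (a x + a y))
      ≤ (1 + M + M + mp) * ∑ z ∈ Xn, dd z * a z := by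
  have h1 : ∑ x ∈ Xn, ∑ y ∈ Xn \ {x}, p x y * (dd x * a x) ≤ ∑ z ∈ Xn, dd z * a z := by
    refine Finset.sum_le_sum fun x _ => ?_
    calc ∑ y ∈ Xn \ {x}, p x y * (dd x * a x)
        = (∑ y ∈ Xn \ {x}, p x y) * (dd x * a x) := (Finset.sum_mul _ _ _).symm
      _ ≤ 1 * (dd x * a x) :=
          mul_le_mul_of_nonneg_right (hrowle x _) (mul_nonneg (hdd x) (hann x))
      _ = dd x * a x := one_mul _
  have h2 : ∑ x ∈ Xn, ∑ y ∈ Xn \ {x}, p x y * (dd x * a y)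
      ≤ M * ∑ z ∈ Xn, dd z * a z := by
    calc ∑ x ∈ Xn, ∑ y ∈ Xn \ {x}, p x y * (dd x * a y)
        ≤ ∑ x ∈ Xn, dd x * (M * a x) := by
          refine Finset.sum_le_sum fun x _ => ?_
          calc ∑ y ∈ Xn \ {x}, p x y * (dd x * a y)
              = dd x * ∑ y ∈ Xn \ {x}, p x y * a y := by
                rw [Finset.mul_sum]; exact Finset.sum_congr rfl fun y _ => by ring
            _ ≤ dd x * (M * a x) := mul_le_mul_of_nonneg_left (hMa1 x _) (hdd x)
      _ = M * ∑ z ∈ Xn, dd z * a z := by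
          rw [Finset.mul_sum]; exact Finset.sum_congr rfl fun z _ => by ring
  have h3 : ∑ x ∈ Xn, ∑ y ∈ Xn \ {x}, p x y * (dd y * a x)
      ≤ M * ∑ z ∈ Xn, dd z * a z := by
    rw [sum_sdiff_comm]
    calc ∑ v ∈ Xn, ∑ u ∈ Xn \ {v}, p u v * (dd v * a u)
        ≤ ∑ v ∈ Xn, dd v * (M * a v) := by
          refine Finset.sum_le_sum fun v _ => ?_
          calc ∑ u ∈ Xn \ {v}, p u v * (dd v * a u)
              = dd v * ∑ u ∈ Xn \ {v}, a u * p u v := by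
                rw [Finset.mul_sum]; exact Finset.sum_congr rfl fun u _ => by ring
            _ ≤ dd v * (M * a v) := mul_le_mul_of_nonneg_left (hMa2 v _) (hdd v)
      _ = M * ∑ z ∈ Xn, dd z * a z := by
          rw [Finset.mul_sum]; exact Finset.sum_congr rfl fun z _ => by ring
  have h4 : ∑ x ∈ Xn, ∑ y ∈ Xn \ {x}, p x y * (dd y * a y)
      ≤ mp * ∑ z ∈ Xn, dd z * a z := by
    rw [sum_sdiff_comm]
    calc ∑ v ∈ Xn, ∑ u ∈ Xn \ {v}, p u v * (dd v * a v)
        ≤ ∑ v ∈ Xn, mp * (dd v * a v) := by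
          refine Finset.sum_le_sum fun v _ => ?_
          calc ∑ u ∈ Xn \ {v}, p u v * (dd v * a v)
              = (∑ u ∈ Xn \ {v}, p u v) * (dd v * a v) := (Finset.sum_mul _ _ _).symm
            _ ≤ mp * (dd v * a v) :=
                mul_le_mul_of_nonneg_right (hcolle v _) (mul_nonneg (hdd v) (hann v))
      _ = mp * ∑ z ∈ Xn, dd z * a z := by
          rw [Finset.mul_sum]
  calc ∑ x ∈ Xn, ∑ y ∈ Xn \ {x}, p x y * ((dd x + dd y) * (a x + a y))
      = ∑ x ∈ Xn, ∑ y ∈ Xn \ {x},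
          (p x y * (dd x * a x) + p x y * (dd x * a y)
            + p x y * (dd y * a x) + p x y * (dd y * a y)) := by
        refine Finset.sum_congr rfl fun x _ => Finset.sum_congr rfl fun y _ => by ring
    _ = (∑ x ∈ Xn, ∑ y ∈ Xn \ {x}, p x y * (dd x * a x))
        + (∑ x ∈ Xn, ∑ y ∈ Xn \ {x}, p x y * (dd x * a y))
        + (∑ x ∈ Xn, ∑ y ∈ Xn \ {x}, p x y * (dd y * a x))
        + (∑ x ∈ Xn, ∑ y ∈ Xn \ {x}, p x y * (dd y * a y)) := by
        simp only [Finset.sum_add_distrib]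
    _ ≤ (∑ z ∈ Xn, dd z * a z) + M * (∑ z ∈ Xn, dd z * a z)
        + M * (∑ z ∈ Xn, dd z * a z) + mp * (∑ z ∈ Xn, dd z * a z) :=
        add_le_add (add_le_add (add_le_add h1 h2) h3) h4
    _ = (1 + M + M + mp) * ∑ z ∈ Xn, dd z * a z := by ring

/-- bound on the coupled generator applied to the distance
function, Lemma 7.3 of the paper. -/
theorem stmt14
    {X : Type*} [Countable X] [DecidableEq X]
    (p : X → X → ℝ) (hpnn : ∀ x y : X, 0 ≤ p x y)
    (hrow : ∀ x : X, HasSum (fun y => p x y) 1)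
    (mp : ℝ) (hcolsum : ∀ y : X, Summable (fun x => p x y))
    (hmp : ∀ y : X, (∑' x, p x y) ≤ mp)
    (a : X → ℝ) (hapos : ∀ x : X, 0 < a x)
    (M : ℝ)
    (ha1 : ∀ x : X, Summable (fun y => p x y * a y))
    (ha2 : ∀ x : X, Summable (fun y => a y * p y x))
    (hM : ∀ x : X, (∑' y, p x y * a y) + (∑' y, a y * p y x) ≤ M * a x)
    (g : ℕ → ℕ → ℕ → ℝ)
    (hgnn : ∀ k α β : ℕ, 0 ≤ g k α β)
    (hg0 : ∀ α β : ℕ, g 0 α β = 0)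
    (hgz : ∀ k α β : ℕ, α < k ∨ α = 0 → g k α β = 0)
    (C : ℝ) (hC : 0 < C)
    (hC2 : ∀ α β γ δ : ℕ,
      ∑ k ∈ Finset.Icc 1 (max α γ), (k : ℝ) * |g k α β - g k γ δ|
        ≤ C * (|(α : ℝ) - (γ : ℝ)| + |(β : ℝ) - (δ : ℝ)|))
    (Xn : Finset X)
    (η η' : X → ℕ) :
    |∑ x ∈ Xn, ∑ y ∈ Xn \ {x}, p x y *
        ∑ k ∈ Finset.range (η x + 1), ∑ l ∈ Finset.range (η' x + 1),
          Gc g k l (η x) (η y) (η' x) (η' y) *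
            ((∑ z ∈ Xn,
                |((if z = x then η x - k else if z = y then η y + k else η z : ℕ) : ℝ)
                  - ((if z = x then η' x - l else if z = y then η' y + l else η' z : ℕ) : ℝ)|
                  * a z)
              - ∑ z ∈ Xn, |(η z : ℝ) - (η' z : ℝ)| * a z)|
      ≤ 2 * C * (1 + mp + M) * ∑ z ∈ Xn, |(η z : ℝ) - (η' z : ℝ)| * a z := by
  classical
  rcases Finset.eq_empty_or_nonempty Xn with hempty | hne
  · simp [hempty]
  obtain ⟨x0, hx0⟩ := hne
  have hmp0 : 0 ≤ mp := le_trans (tsum_nonneg fun x => hpnn x x0) (hmp x0)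
  have hS0 : 0 ≤ ∑ z ∈ Xn, |(η z : ℝ) - (η' z : ℝ)| * a z :=
    Finset.sum_nonneg fun z _ => mul_nonneg (abs_nonneg _) (hapos z).le
  have hrowle : ∀ (x : X) (s : Finset X), ∑ y ∈ s, p x y ≤ 1 := by
    intro x s
    have := Summable.sum_le_tsum s (fun y _ => hpnn x y) (hrow x).summable
    rwa [(hrow x).tsum_eq] at this
  have hcolle : ∀ (y : X) (s : Finset X), ∑ x ∈ s, p x y ≤ mp := fun y s =>
    le_trans (Summable.sum_le_tsum s (fun x _ => hpnn x y) (hcolsum y)) (hmp y)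
  have hMa1 : ∀ (x : X) (s : Finset X), ∑ y ∈ s, p x y * a y ≤ M * a x := by
    intro x s
    have h1 := Summable.sum_le_tsum s (fun y _ => mul_nonneg (hpnn x y) (hapos y).le) (ha1 x)
    have h2 : (0:ℝ) ≤ ∑' y, a y * p y x :=
      tsum_nonneg fun y => mul_nonneg (hapos y).le (hpnn y x)
    have := hM x
    linarith
  have hMa2 : ∀ (y : X) (s : Finset X), ∑ x ∈ s, a x * p x y ≤ M * a y := by
    intro y s
    have h1 := Summable.sum_le_tsum s (fun x _ => mul_nonneg (hapos x).le (hpnn x y)) (ha2 y)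
    have h2 : (0:ℝ) ≤ ∑' z, p y z * a z :=
      tsum_nonneg fun z => mul_nonneg (hpnn y z) (hapos z).le
    have := hM y
    linarith
  have hinner : ∀ x ∈ Xn, ∀ y ∈ Xn \ {x},
      |∑ k ∈ Finset.range (η x + 1), ∑ l ∈ Finset.range (η' x + 1),
        Gc g k l (η x) (η y) (η' x) (η' y) *
          ((∑ z ∈ Xn,
              |((if z = x then η x - k else if z = y then η y + k else η z : ℕ) : ℝ)
                - ((if z = x then η' x - l else if z = y then η' y + l else η' z : ℕ) : ℝ)|
                * a z)
            - ∑ z ∈ Xn, |(η z : ℝ) - (η' z : ℝ)| * a z)|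
      ≤ C * ((|(η x : ℝ) - (η' x : ℝ)| + |(η y : ℝ) - (η' y : ℝ)|) * (a x + a y)) := by
    intro x hx y hy
    rw [Finset.mem_sdiff, Finset.mem_singleton] at hy
    obtain ⟨hyXn, hyx⟩ := hy
    have hΔ : ∀ k l : ℕ, k ≤ η x → l ≤ η' x →
        |(∑ z ∈ Xn,
            |((if z = x then η x - k else if z = y then η y + k else η z : ℕ) : ℝ)
              - ((if z = x then η' x - l else if z = y then η' y + l else η' z : ℕ) : ℝ)|
              * a z)
          - ∑ z ∈ Xn, |(η z : ℝ) - (η' z : ℝ)| * a z|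
        ≤ |(k : ℝ) - (l : ℝ)| * (a x + a y) := by
      intro k l hk hl
      set φ : X → ℝ := fun z =>
        (|((if z = x then η x - k else if z = y then η y + k else η z : ℕ) : ℝ)
            - ((if z = x then η' x - l else if z = y then η' y + l else η' z : ℕ) : ℝ)|
          - |(η z : ℝ) - (η' z : ℝ)|) * a z with hφ
      have hrwsum : (∑ z ∈ Xn,
            |((if z = x then η x - k else if z = y then η y + k else η z : ℕ) : ℝ)
              - ((if z = x then η' x - l else if z = y then η' y + l else η' z : ℕ) : ℝ)|
              * a z)
          - (∑ z ∈ Xn, |(η z : ℝ) - (η' z : ℝ)| * a z) = ∑ z ∈ Xn, φ z := by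
        rw [← Finset.sum_sub_distrib]
        exact Finset.sum_congr rfl fun z _ => by rw [hφ]; ring
      rw [hrwsum]
      have hsub : ({x, y} : Finset X) ⊆ Xn := by
        intro z hz
        rcases Finset.mem_insert.1 hz with h | h
        · exact h ▸ hx
        · exact (Finset.mem_singleton.1 h) ▸ hyXn
      have hzero : ∀ z ∈ Xn, z ∉ ({x, y} : Finset X) → φ z = 0 := by
        intro z _ hzn
        simp only [Finset.mem_insert, Finset.mem_singleton, not_or] at hzn
        simp [hφ, hzn.1, hzn.2]
      have hpair : ∑ z ∈ Xn, φ z = φ x + φ y := by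
        rw [← Finset.sum_subset hsub hzero, Finset.sum_pair (fun h => hyx h.symm)]
      have hφx : φ x = (|((η x : ℝ) - (k : ℝ)) - ((η' x : ℝ) - (l : ℝ))|
          - |(η x : ℝ) - (η' x : ℝ)|) * a x := by
        simp only [hφ, eq_self_iff_true, if_true]
        rw [Nat.cast_sub hk, Nat.cast_sub hl]
      have hφy : φ y = (|((η y : ℝ) + (k : ℝ)) - ((η' y : ℝ) + (l : ℝ))|
          - |(η y : ℝ) - (η' y : ℝ)|) * a y := by
        simp only [hφ, if_neg hyx, eq_self_iff_true, if_true]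
        rw [Nat.cast_add, Nat.cast_add]
      have hbx : |φ x| ≤ |(k : ℝ) - (l : ℝ)| * a x := by
        rw [hφx, abs_mul, abs_of_nonneg (hapos x).le]
        refine mul_le_mul_of_nonneg_right ?_ (hapos x).le
        refine le_trans (abs_abs_sub_abs_le_abs_sub _ _) ?_
        rw [show ((η x : ℝ) - (k : ℝ) - ((η' x : ℝ) - (l : ℝ)))
            - ((η x : ℝ) - (η' x : ℝ)) = -((k : ℝ) - (l : ℝ)) by ring, abs_neg]
      have hby : |φ y| ≤ |(k : ℝ) - (l : ℝ)| * a y := by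
        rw [hφy, abs_mul, abs_of_nonneg (hapos y).le]
        refine mul_le_mul_of_nonneg_right ?_ (hapos y).le
        refine le_trans (abs_abs_sub_abs_le_abs_sub _ _) ?_
        rw [show ((η y : ℝ) + (k : ℝ) - ((η' y : ℝ) + (l : ℝ)))
            - ((η y : ℝ) - (η' y : ℝ)) = (k : ℝ) - (l : ℝ) by ring]
      rw [hpair]
      calc |φ x + φ y| ≤ |φ x| + |φ y| := abs_add_le _ _
        _ ≤ |(k : ℝ) - (l : ℝ)| * a x + |(k : ℝ) - (l : ℝ)| * a y := add_le_add hbx hby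
        _ = |(k : ℝ) - (l : ℝ)| * (a x + a y) := by ring
    have hGnn : ∀ k l : ℕ, 0 ≤ Gc g k l (η x) (η y) (η' x) (η' y) :=
      fun k l => Gc_nonneg g hgnn hgz _ _ _ _ k l
    calc |∑ k ∈ Finset.range (η x + 1), ∑ l ∈ Finset.range (η' x + 1),
          Gc g k l (η x) (η y) (η' x) (η' y) * _|
        ≤ ∑ k ∈ Finset.range (η x + 1), |∑ l ∈ Finset.range (η' x + 1),
            Gc g k l (η x) (η y) (η' x) (η' y) * _| := Finset.abs_sum_le_sum_abs _ _
      _ ≤ ∑ k ∈ Finset.range (η x + 1), ∑ l ∈ Finset.range (η' x + 1),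
            |Gc g k l (η x) (η y) (η' x) (η' y) * _| :=
          Finset.sum_le_sum fun k _ => Finset.abs_sum_le_sum_abs _ _
      _ ≤ ∑ k ∈ Finset.range (η x + 1), ∑ l ∈ Finset.range (η' x + 1),
            Gc g k l (η x) (η y) (η' x) (η' y) * (|(k : ℝ) - (l : ℝ)| * (a x + a y)) := by
          refine Finset.sum_le_sum fun k hk => Finset.sum_le_sum fun l hl => ?_
          rw [abs_mul, abs_of_nonneg (hGnn k l)]
          exact mul_le_mul_of_nonneg_left
            (hΔ k l (by simp only [Finset.mem_range] at hk; omega)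
              (by simp only [Finset.mem_range] at hl; omega)) (hGnn k l)
      _ = (∑ k ∈ Finset.range (η x + 1), ∑ l ∈ Finset.range (η' x + 1),
            Gc g k l (η x) (η y) (η' x) (η' y) * |(k : ℝ) - (l : ℝ)|) * (a x + a y) := by
          rw [Finset.sum_mul]
          refine Finset.sum_congr rfl fun k _ => ?_
          rw [Finset.sum_mul]
          exact Finset.sum_congr rfl fun l _ => by ring
      _ ≤ (C * (|(η x : ℝ) - (η' x : ℝ)| + |(η y : ℝ) - (η' y : ℝ)|)) * (a x + a y) :=
          mul_le_mul_of_nonneg_right (key g hgnn hgz C hC2 (η x) (η y) (η' x) (η' y))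
            (add_nonneg (hapos x).le (hapos y).le)
      _ = C * ((|(η x : ℝ) - (η' x : ℝ)| + |(η y : ℝ) - (η' y : ℝ)|) * (a x + a y)) := by
          ring
  calc |∑ x ∈ Xn, ∑ y ∈ Xn \ {x}, p x y * _|
      ≤ ∑ x ∈ Xn, |∑ y ∈ Xn \ {x}, p x y * _| := Finset.abs_sum_le_sum_abs _ _
    _ ≤ ∑ x ∈ Xn, ∑ y ∈ Xn \ {x}, |p x y * _| :=
        Finset.sum_le_sum fun x _ => Finset.abs_sum_le_sum_abs _ _
    _ ≤ ∑ x ∈ Xn, ∑ y ∈ Xn \ {x}, p x y *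
          (C * ((|(η x : ℝ) - (η' x : ℝ)| + |(η y : ℝ) - (η' y : ℝ)|) * (a x + a y))) := by
        refine Finset.sum_le_sum fun x hx => Finset.sum_le_sum fun y hy => ?_
        rw [abs_mul, abs_of_nonneg (hpnn x y)]
        exact mul_le_mul_of_nonneg_left (hinner x hx y hy) (hpnn x y)
    _ = C * ∑ x ∈ Xn, ∑ y ∈ Xn \ {x}, p x y *
          ((|(η x : ℝ) - (η' x : ℝ)| + |(η y : ℝ) - (η' y : ℝ)|) * (a x + a y)) := by
        rw [Finset.mul_sum]
        refine Finset.sum_congr rfl fun x _ => ?_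
        rw [Finset.mul_sum]
        exact Finset.sum_congr rfl fun y _ => by ring
    _ ≤ C * ((1 + M + M + mp) * ∑ z ∈ Xn, |(η z : ℝ) - (η' z : ℝ)| * a z) :=
        mul_le_mul_of_nonneg_left
          (outer_bound Xn p a (fun z => |(η z : ℝ) - (η' z : ℝ)|)
            (fun z => (hapos z).le) (fun z => abs_nonneg _) M mp hrowle hMa1 hMa2 hcolle)
          hC.le
    _ ≤ 2 * C * (1 + mp + M) * ∑ z ∈ Xn, |(η z : ℝ) - (η' z : ℝ)| * a z := by
        nlinarith [mul_nonneg hC.le hS0, mul_nonneg (mul_nonneg hC.le hS0) hmp0]
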